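/- arXiv:2103.13387 — 5 statements merged into one kernel-verified Lean document; each statement's English description precedes it below -/
import Mathlib

section
/- Let G be a locally compact Hausdorff group with left Haar measure λ_G, N a closed normal subgroup with left Haar measure λ_N, ν a measure on G/N satisfying Weil's formula, and ξ : N → 𝕋 a G-invariant character. Then for all continuous compactly supported f, g : G → ℂ, every x ∈ G, and every function F : G/N → ℂ satisfying F(q(y)) = T_ξ(f)(y) · T_ξ(g)(y⁻¹ x) for all y ∈ G, one has T_ξ(f ∗_G g)(x) = ∫_{G/N} F dν. -/
open MeasureTheory
open scoped Pointwise

/-- `T_ξ (f ∗_G g) = T_ξ f ♮ T_ξ g` for `f, g ∈ C_c(G)` and a `G`-invariant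
character `ξ` of a closed normal subgroup `N`. -/
theorem Txi_conv
    {G : Type*} [Group G] [TopologicalSpace G] [IsTopologicalGroup G]
    [LocallyCompactSpace G] [T2Space G] [MeasurableSpace G] [BorelSpace G]
    (lamG : Measure G) [lamG.IsHaarMeasure]
    (N : Subgroup G) [hNrm : N.Normal] (hNc : IsClosed (N : Set G))
    (lamN : Measure ↥N) [lamN.IsHaarMeasure]
    (ν : Measure (G ⧸ N))
    (hWeil : ∀ (f : G → ℂ) (F : G ⧸ N → ℂ), Continuous f → HasCompactSupport f →
      (∀ x : G, F (QuotientGroup.mk x) = ∫ s : ↥N, f (x * (s : G)) ∂lamN) →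
      ∫ ζ, F ζ ∂ν = ∫ x, f x ∂lamG)
    (ξ : N →* Circle) (hξcont : Continuous fun s : ↥N => ξ s)
    (hinv : ∀ (x s : G) (hs : s ∈ N) (hs' : x⁻¹ * s * x ∈ N),
      ξ ⟨x⁻¹ * s * x, hs'⟩ = ξ ⟨s, hs⟩)
    (f g : G → ℂ)
    (hf : Continuous f) (hfc : HasCompactSupport f)
    (hg : Continuous g) (hgc : HasCompactSupport g)
    (x : G) (F : G ⧸ N → ℂ)
    (hF : ∀ y : G, F (QuotientGroup.mk y)
      = (∫ t : ↥N, f (y * (t : G)) * starRingEnd ℂ (ξ t) ∂lamN)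
        * (∫ t : ↥N, g (y⁻¹ * x * (t : G)) * starRingEnd ℂ (ξ t) ∂lamN)) :
    ∫ s : ↥N, (∫ y, f y * g (y⁻¹ * (x * (s : G))) ∂lamG) * starRingEnd ℂ (ξ s) ∂lamN
      = ∫ ζ, F ζ ∂ν := by
  have hNemb : Topology.IsClosedEmbedding ((↑) : ↥N → G) :=
    hNc.isClosedEmbedding_subtypeVal
  haveI hBN : BorelSpace ↥N := Subtype.borelSpace (N : Set G)
  -- the conjugated character as a ℂ-valued function
  set χ : ↥N → ℂ := fun t => starRingEnd ℂ (ξ t) with hχdef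
  have hχ : Continuous χ :=
    continuous_star.comp (continuous_subtype_val.comp hξcont)
  -- T_ξ g
  set c : G → ℂ := fun z => ∫ t : ↥N, g (z * (t : G)) * χ t ∂lamN with hcdef
  -- translation property of c
  have c_shift : ∀ (z : G) (n : ↥N), c (z * (n : G)) = (ξ n : ℂ) * c z := by
    intro z n
    set ψ : ↥N → ℂ := fun t => g (z * (t : G)) * starRingEnd ℂ (ξ (n⁻¹ * t)) with hψdef
    have e0 : ∀ t : ↥N, g ((z * (n : G)) * (t : G)) * χ t = ψ (n * t) := by
      intro t
      simp [hψdef, hχdef, mul_assoc]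
    have e1 : c (z * (n : G)) = ∫ t : ↥N, ψ (n * t) ∂lamN := by
      simp only [hcdef]
      exact integral_congr_ae (Filter.Eventually.of_forall e0)
    have e2 : ∫ t : ↥N, ψ (n * t) ∂lamN = ∫ t : ↥N, ψ t ∂lamN :=
      integral_mul_left_eq_self ψ n
    rw [e1, e2, hψdef, hcdef]
    rw [← integral_const_mul]
    congr 1 with t
    simp only [map_mul, map_inv, Circle.coe_mul, Circle.coe_inv_eq_conj, Complex.conj_conj,
      hχdef]
    ring
  -- continuity of c
  have hc_cont : Continuous c := by
    rw [continuous_iff_continuousAt]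
    intro z₀
    obtain ⟨t, t_comp, ht⟩ : ∃ t, IsCompact t ∧ t ∈ nhds z₀ := exists_compact_mem_nhds z₀
    have K_comp : IsCompact (t⁻¹ * tsupport g) := IsCompact.mul t_comp.inv hgc
    have k_comp : IsCompact (Subtype.val ⁻¹' (t⁻¹ * tsupport g) : Set ↥N) :=
      hNemb.isCompact_preimage K_comp
    have A : ContinuousOn c t := by
      rw [hcdef]
      apply continuousOn_integral_of_compact_support k_comp
      · exact (((hg.comp (continuous_fst.mul
          (continuous_subtype_val.comp continuous_snd))).mul
          (hχ.comp continuous_snd))).continuousOn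
      · intro p n hp hn
        have hgz : g (p * (n : G)) = 0 := by
          by_contra hne
          apply hn
          have hmem : p * (n : G) ∈ tsupport g := subset_tsupport _ hne
          have hEq : (n : G) = p⁻¹ * (p * (n : G)) := by group
          simp only [Set.mem_preimage]
          rw [hEq]
          exact Set.mul_mem_mul (Set.inv_mem_inv.2 hp) hmem
        simp [hgz]
    exact A.continuousAt ht
  -- the function h to which we apply Weil's formula
  set h : G → ℂ := fun y => f y * c (y⁻¹ * x) with hhdef
  have hh_cont : Continuous h :=
    hf.mul (hc_cont.comp (continuous_inv.mul continuous_const))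
  have hh_supp : HasCompactSupport h := hfc.mul_right
  -- verification of the Weil hypothesis for h and F
  have hFh : ∀ y : G, F (QuotientGroup.mk y) = ∫ s : ↥N, h (y * (s : G)) ∂lamN := by
    intro y
    have step : ∀ s : ↥N, h (y * (s : G)) = (f (y * (s : G)) * χ s) * c (y⁻¹ * x) := by
      intro s
      have hn : (y⁻¹ * x)⁻¹ * (s : G)⁻¹ * (y⁻¹ * x) ∈ N := by
        have := hNrm.conj_mem _ (inv_mem s.2) (y⁻¹ * x)⁻¹
        simpa [inv_inv] using this
      have hz : (y * (s : G))⁻¹ * x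
          = (y⁻¹ * x) * ((y⁻¹ * x)⁻¹ * (s : G)⁻¹ * (y⁻¹ * x)) := by group
      have hxi : ξ ⟨(y⁻¹ * x)⁻¹ * (s : G)⁻¹ * (y⁻¹ * x), hn⟩ = ξ s⁻¹ := by
        rw [hinv (y⁻¹ * x) ((s : G))⁻¹ (inv_mem s.2) hn]
        congr 1
      calc h (y * (s : G)) = f (y * (s : G)) * c ((y⁻¹ * x) *
            ((⟨(y⁻¹ * x)⁻¹ * (s : G)⁻¹ * (y⁻¹ * x), hn⟩ : ↥N) : G)) := by
            rw [hhdef]; simp only [hz]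
        _ = f (y * (s : G)) * ((ξ s⁻¹ : ℂ) * c (y⁻¹ * x)) := by
            rw [c_shift, hxi]
        _ = (f (y * (s : G)) * χ s) * c (y⁻¹ * x) := by
            simp only [map_inv, Circle.coe_inv_eq_conj, hχdef]
            ring
    rw [hF y, eq_comm]
    calc ∫ s : ↥N, h (y * (s : G)) ∂lamN
        = ∫ s : ↥N, (f (y * (s : G)) * χ s) * c (y⁻¹ * x) ∂lamN := by
          simp only [step]
      _ = (∫ s : ↥N, f (y * (s : G)) * χ s ∂lamN) * c (y⁻¹ * x) :=
          integral_mul_const _ _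
      _ = (∫ t : ↥N, f (y * (t : G)) * starRingEnd ℂ (ξ t) ∂lamN)
          * (∫ t : ↥N, g (y⁻¹ * x * (t : G)) * starRingEnd ℂ (ξ t) ∂lamN) := by
          simp only [hχdef, hcdef]
  -- Weil's formula
  have weil := hWeil h F hh_cont hh_supp hFh
  -- the integrand on ↥N × G
  set Φ : ↥N → G → ℂ := fun s y => f y * g (y⁻¹ * (x * (s : G))) * χ s with hΦdef
  have hΦcont : Continuous (Function.uncurry Φ) := by
    apply Continuous.mul
    · exact (hf.comp continuous_snd).mul (hg.comp ((continuous_snd.inv).mul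
        (continuous_const.mul (continuous_subtype_val.comp continuous_fst))))
    · exact hχ.comp continuous_fst
  have hΦsupp : HasCompactSupport (Function.uncurry Φ) := by
    have K_comp : IsCompact ((fun w => x⁻¹ * w) '' (tsupport f * tsupport g)) :=
      (IsCompact.mul hfc hgc).image (continuous_const.mul continuous_id)
    have k_comp : IsCompact
        (Subtype.val ⁻¹' ((fun w => x⁻¹ * w) '' (tsupport f * tsupport g)) : Set ↥N) :=
      hNemb.isCompact_preimage K_comp
    apply IsCompact.of_isClosed_subset (k_comp.prod hfc) (isClosed_tsupport _)
    rw [tsupport]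
    apply closure_minimal _ (k_comp.isClosed.prod (isClosed_tsupport f))
    intro p hp
    have hf0 : f p.2 ≠ 0 := by
      intro h0
      apply hp
      simp [Function.uncurry, hΦdef, h0]
    have hg0 : g (p.2⁻¹ * (x * (p.1 : G))) ≠ 0 := by
      intro h0
      apply hp
      simp [Function.uncurry, hΦdef, h0]
    refine Set.mem_prod.2 ⟨?_, subset_tsupport f hf0⟩
    simp only [Set.mem_preimage]
    refine ⟨x * (p.1 : G), ?_, by group⟩
    have hEq : x * (p.1 : G) = p.2 * (p.2⁻¹ * (x * (p.1 : G))) := by group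
    rw [hEq]
    exact Set.mul_mem_mul (subset_tsupport _ hf0) (subset_tsupport _ hg0)
  have swap := integral_integral_swap_of_hasCompactSupport hΦcont hΦsupp
    (μ := lamN) (ν := lamG)
  calc ∫ s : ↥N, (∫ y, f y * g (y⁻¹ * (x * (s : G))) ∂lamG) * starRingEnd ℂ (ξ s) ∂lamN
      = ∫ s : ↥N, ∫ y, Φ s y ∂lamG ∂lamN := by
        congr 1 with s
        simp only [hΦdef]
        exact (integral_mul_const _ _).symm
    _ = ∫ y, ∫ s : ↥N, Φ s y ∂lamN ∂lamG := swap
    _ = ∫ y, h y ∂lamG := by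
        congr 1 with y
        calc ∫ s : ↥N, Φ s y ∂lamN
            = ∫ s : ↥N, f y * (g (y⁻¹ * x * (s : G)) * χ s) ∂lamN := by
              congr 1 with s
              simp only [hΦdef, mul_assoc]
          _ = f y * ∫ s : ↥N, g (y⁻¹ * x * (s : G)) * χ s ∂lamN :=
              integral_const_mul _ _
          _ = h y := by simp only [hhdef, hcdef]
    _ = ∫ ζ, F ζ ∂ν := weil.symm
end

section
/- Let G be a locally compact Hausdorff group with left Haar measure λ_G, N a compact normal subgroup equipped with the probability Haar measure λ_N, ν a measure on G/N satisfying Weil's formula, and ξ : N → 𝕋 a G-invariant character. Then for all continuous compactly supported f, g : G → ℂ and all x ∈ G, T_ξ(f ∗_G g)(x) = (T_ξ(f) ∗_G T_ξ(g))(x). -/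
open MeasureTheory

section Aux

variable {G : Type*} [Group G] [TopologicalSpace G] [IsTopologicalGroup G]
    [MeasurableSpace G] [BorelSpace G] {N : Subgroup G}

/-- The operator `T_ξ` acting on functions on `G`. -/
noncomputable def TxiAux (lamN : Measure ↥N) (ξ : N →* Circle) (φ : G → ℂ) : G → ℂ :=
  fun z => ∫ t : ↥N, φ (z * (t : G)) * starRingEnd ℂ (ξ t) ∂lamN

lemma TxiAux_shift (lamN : Measure ↥N) [lamN.IsHaarMeasure]
    (ξ : N →* Circle) (φ : G → ℂ) (z : G) (u : ↥N) :
    ∫ t : ↥N, φ (z * ((u * t : ↥N) : G)) * starRingEnd ℂ (ξ t) ∂lamN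
      = (ξ u : ℂ) * TxiAux lamN ξ φ z := by
  haveI : BorelSpace ↥N := Subtype.borelSpace (N : Set G)
  have h1 : ∫ t : ↥N, φ (z * ((u * t : ↥N) : G)) * starRingEnd ℂ (ξ t) ∂lamN
      = ∫ t : ↥N, (fun t : ↥N => φ (z * (t : G)) * starRingEnd ℂ (ξ (u⁻¹ * t))) (u * t) ∂lamN := by
    congr 1 with t
    simp [inv_mul_cancel_left]
  rw [h1, integral_mul_left_eq_self (μ := lamN)
    (fun t : ↥N => φ (z * (t : G)) * starRingEnd ℂ (ξ (u⁻¹ * t))) u]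
  rw [TxiAux, ← integral_const_mul]
  congr 1 with t
  have h3 : (ξ (u⁻¹ * t) : ℂ) = (ξ u : ℂ)⁻¹ * (ξ t : ℂ) := by
    simp [map_mul, map_inv]
  rw [h3, map_mul]
  have h2 : starRingEnd ℂ ((ξ u : ℂ)⁻¹) = (ξ u : ℂ) := by
    rw [← Circle.coe_inv, Circle.coe_inv_eq_conj, Complex.conj_conj]
  rw [h2]
  ring

lemma TxiAux_shift_right (lamN : Measure ↥N) [lamN.IsHaarMeasure]
    (ξ : N →* Circle) (φ : G → ℂ) (z : G) (u : ↥N) :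
    TxiAux lamN ξ φ (z * (u : G)) = (ξ u : ℂ) * TxiAux lamN ξ φ z := by
  rw [← TxiAux_shift lamN ξ φ z u]
  simp only [TxiAux]
  congr 1 with t
  simp [mul_assoc]

lemma TxiAux_shift_left [hNrm : N.Normal] (lamN : Measure ↥N) [lamN.IsHaarMeasure]
    (ξ : N →* Circle)
    (hinv : ∀ (x s : G) (hs : s ∈ N) (hs' : x⁻¹ * s * x ∈ N),
      ξ ⟨x⁻¹ * s * x, hs'⟩ = ξ ⟨s, hs⟩)
    (φ : G → ℂ) (z : G) (u : ↥N) :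
    TxiAux lamN ξ φ ((u : G) * z) = (ξ u : ℂ) * TxiAux lamN ξ φ z := by
  have mem : z⁻¹ * (u : G) * z ∈ N := by
    have := hNrm.conj_mem (u : G) u.2 z⁻¹
    simpa using this
  have harg : ∀ t : ↥N,
      (u : G) * z * (t : G) = z * (((⟨z⁻¹ * (u : G) * z, mem⟩ : ↥N) * t : ↥N) : G) := by
    intro t
    push_cast
    group
  calc TxiAux lamN ξ φ ((u : G) * z)
      = ∫ t : ↥N, φ (z * (((⟨z⁻¹ * (u : G) * z, mem⟩ : ↥N) * t : ↥N) : G))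
          * starRingEnd ℂ (ξ t) ∂lamN := by
        simp only [TxiAux]
        congr 1 with t
        rw [harg t]
    _ = (ξ (⟨z⁻¹ * (u : G) * z, mem⟩ : ↥N) : ℂ) * TxiAux lamN ξ φ z :=
        TxiAux_shift lamN ξ φ z _
    _ = (ξ u : ℂ) * TxiAux lamN ξ φ z := by
        rw [hinv z (u : G) u.2 mem]

lemma TxiAux_cancel [hNrm : N.Normal] (lamN : Measure ↥N) [lamN.IsHaarMeasure]
    (ξ : N →* Circle)
    (hinv : ∀ (x s : G) (hs : s ∈ N) (hs' : x⁻¹ * s * x ∈ N),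
      ξ ⟨x⁻¹ * s * x, hs'⟩ = ξ ⟨s, hs⟩)
    (f g : G → ℂ) (x y : G) (s : ↥N) :
    TxiAux lamN ξ f (y * (s : G)) * TxiAux lamN ξ g ((y * (s : G))⁻¹ * x)
      = TxiAux lamN ξ f y * TxiAux lamN ξ g (y⁻¹ * x) := by
  have h1 : (y * (s : G))⁻¹ * x = ((s⁻¹ : ↥N) : G) * (y⁻¹ * x) := by
    simp [mul_inv_rev, mul_assoc]
  rw [h1, TxiAux_shift_left lamN ξ hinv, TxiAux_shift_right lamN ξ]
  have h2 : (ξ s⁻¹ : ℂ) = (ξ s : ℂ)⁻¹ := by simp [map_inv]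
  rw [h2]
  have h3 : (ξ s : ℂ) ≠ 0 := Circle.coe_ne_zero _
  field_simp

lemma TxiAux_cont {N : Subgroup G} (hNcpt : IsCompact (N : Set G))
    (lamN : Measure ↥N) [IsProbabilityMeasure lamN]
    (ξ : N →* Circle) (hξcont : Continuous fun s : ↥N => ξ s)
    (φ : G → ℂ) (hφ : Continuous φ) :
    Continuous (TxiAux lamN ξ φ) := by
  haveI : BorelSpace ↥N := Subtype.borelSpace (N : Set G)
  haveI : CompactSpace ↥N := isCompact_iff_compactSpace.mp hNcpt
  have hxc : Continuous fun t : ↥N => starRingEnd ℂ (ξ t : ℂ) :=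
    Complex.continuous_conj.comp (continuous_subtype_val.comp hξcont)
  have hint : ∀ z : G,
      Integrable (fun t : ↥N => φ (z * (t : G)) * starRingEnd ℂ (ξ t)) lamN := by
    intro z
    apply Continuous.integrable_of_hasCompactSupport
    · exact (hφ.comp (continuous_const.mul continuous_subtype_val)).mul hxc
    · exact HasCompactSupport.of_compactSpace _
  rw [continuous_iff_continuousAt]
  intro z₀
  rw [ContinuousAt, Metric.tendsto_nhds]
  intro ε hε
  have hev : ∀ᶠ z in nhds z₀, ∀ t : ↥N, t ∈ (Set.univ : Set ↥N) →
      dist (φ (z * (t : G))) (φ (z₀ * (t : G))) < ε / 2 := by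
    apply isCompact_univ.eventually_forall_of_forall_eventually
    intro t _
    have hc : Continuous fun p : G × ↥N => dist (φ (p.1 * (p.2 : G))) (φ (z₀ * (p.2 : G))) :=
      Continuous.dist (hφ.comp (continuous_fst.mul (continuous_subtype_val.comp continuous_snd)))
        (hφ.comp (continuous_const.mul (continuous_subtype_val.comp continuous_snd)))
    have hmem : (z₀, t) ∈ {p : G × ↥N |
        dist (φ (p.1 * (p.2 : G))) (φ (z₀ * (p.2 : G))) < ε / 2} := by
      simp [Set.mem_setOf_eq, dist_self]
      linarith
    exact (isOpen_lt hc continuous_const).mem_nhds hmem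
  filter_upwards [hev] with z hz
  have hd : dist (TxiAux lamN ξ φ z) (TxiAux lamN ξ φ z₀) ≤ ε / 2 := by
    rw [dist_eq_norm, TxiAux, TxiAux, ← integral_sub (hint z) (hint z₀)]
    have hb : ∀ t : ↥N,
        ‖φ (z * (t : G)) * starRingEnd ℂ (ξ t) - φ (z₀ * (t : G)) * starRingEnd ℂ (ξ t)‖
          ≤ ε / 2 := by
      intro t
      rw [← sub_mul, norm_mul]
      have h1 : ‖starRingEnd ℂ (ξ t : ℂ)‖ = 1 := by
        rw [RCLike.norm_conj]
        simpa using Circle.norm_coe (ξ t)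
      rw [h1, mul_one, ← dist_eq_norm]
      exact le_of_lt (hz t (Set.mem_univ t))
    calc ‖∫ t : ↥N, (φ (z * (t : G)) * starRingEnd ℂ (ξ t)
            - φ (z₀ * (t : G)) * starRingEnd ℂ (ξ t)) ∂lamN‖
        ≤ ε / 2 * (lamN Set.univ).toReal :=
          norm_integral_le_of_norm_le_const (Filter.Eventually.of_forall hb)
      _ = ε / 2 := by simp
  linarith [hd]

lemma TxiAux_supp [T2Space G] {N : Subgroup G} (hNcpt : IsCompact (N : Set G))
    (lamN : Measure ↥N) (ξ : N →* Circle)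
    (φ : G → ℂ) (hφc : HasCompactSupport φ) :
    HasCompactSupport (TxiAux lamN ξ φ) := by
  apply HasCompactSupport.intro (hφc.mul hNcpt)
  intro z hz
  have h0 : ∀ t : ↥N, φ (z * (t : G)) = 0 := by
    intro t
    by_contra h
    apply hz
    have hz2 : z = (z * (t : G)) * ((t : G))⁻¹ := by group
    rw [hz2]
    exact Set.mul_mem_mul (subset_tsupport φ h) (N.inv_mem t.2)
  simp only [TxiAux, h0, zero_mul, integral_zero]

end Aux

/-- If `N` is a compact normal subgroup with the probability Haar measure
`λ_N`, then `T_ξ (f ∗_G g) = T_ξ f ∗_G T_ξ g` for `f, g ∈ C_c(G)`. -/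
theorem Txi_conv_compact_probability
    {G : Type*} [Group G] [TopologicalSpace G] [IsTopologicalGroup G]
    [LocallyCompactSpace G] [T2Space G] [MeasurableSpace G] [BorelSpace G]
    (lamG : Measure G) [lamG.IsHaarMeasure]
    (N : Subgroup G) [hNrm : N.Normal] (hNcpt : IsCompact (N : Set G))
    (lamN : Measure ↥N) [lamN.IsHaarMeasure] [IsProbabilityMeasure lamN]
    (ν : Measure (G ⧸ N))
    (hWeil : ∀ (f : G → ℂ) (F : G ⧸ N → ℂ), Continuous f → HasCompactSupport f →
      (∀ x : G, F (QuotientGroup.mk x) = ∫ s : ↥N, f (x * (s : G)) ∂lamN) →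
      ∫ ζ, F ζ ∂ν = ∫ x, f x ∂lamG)
    (ξ : N →* Circle) (hξcont : Continuous fun s : ↥N => ξ s)
    (hinv : ∀ (x s : G) (hs : s ∈ N) (hs' : x⁻¹ * s * x ∈ N),
      ξ ⟨x⁻¹ * s * x, hs'⟩ = ξ ⟨s, hs⟩)
    (f g : G → ℂ)
    (hf : Continuous f) (hfc : HasCompactSupport f)
    (hg : Continuous g) (hgc : HasCompactSupport g)
    (x : G) :
    ∫ s : ↥N, (∫ y, f y * g (y⁻¹ * (x * (s : G))) ∂lamG) * starRingEnd ℂ (ξ s) ∂lamN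
      = ∫ y, (∫ t : ↥N, f (y * (t : G)) * starRingEnd ℂ (ξ t) ∂lamN)
          * (∫ t : ↥N, g (y⁻¹ * x * (t : G)) * starRingEnd ℂ (ξ t) ∂lamN) ∂lamG := by
  haveI : BorelSpace ↥N := Subtype.borelSpace (N : Set G)
  haveI : CompactSpace ↥N := isCompact_iff_compactSpace.mp hNcpt
  have hxc : Continuous fun t : ↥N => starRingEnd ℂ (ξ t : ℂ) :=
    Complex.continuous_conj.comp (continuous_subtype_val.comp hξcont)
  -- notation
  set Tf : G → ℂ := TxiAux lamN ξ f with hTf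
  set Tg : G → ℂ := TxiAux lamN ξ g with hTg
  have hTfc : Continuous Tf := TxiAux_cont hNcpt lamN ξ hξcont f hf
  have hTgc : Continuous Tg := TxiAux_cont hNcpt lamN ξ hξcont g hg
  have hTfs : HasCompactSupport Tf := TxiAux_supp hNcpt lamN ξ f hfc
  -- the function on the quotient
  have hQ : ∀ (y : G) (s : ↥N),
      Tf (y * (s : G)) * Tg ((y * (s : G))⁻¹ * x) = Tf y * Tg (y⁻¹ * x) := by
    intro y s
    exact TxiAux_cancel lamN ξ hinv f g x y s
  set F : G ⧸ N → ℂ :=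
    fun ζ => Quotient.liftOn' ζ (fun y => Tf y * Tg (y⁻¹ * x)) (by
      intro a b hab
      rw [QuotientGroup.leftRel_apply] at hab
      have hb : b = a * (((⟨a⁻¹ * b, hab⟩ : ↥N)) : G) := by
        simp
      show Tf a * Tg (a⁻¹ * x) = Tf b * Tg (b⁻¹ * x)
      rw [hb]
      exact (hQ a ⟨a⁻¹ * b, hab⟩).symm) with hFdef
  have hF : ∀ y : G, F (QuotientGroup.mk y) = Tf y * Tg (y⁻¹ * x) := fun y => rfl
  -- first Weil application
  have hW1 : ∫ ζ, F ζ ∂ν = ∫ y, f y * Tg (y⁻¹ * x) ∂lamG := by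
    apply hWeil
    · exact hf.mul (hTgc.comp (continuous_inv.mul continuous_const))
    · exact hfc.mul_right
    · intro y
      rw [hF y]
      symm
      calc ∫ s : ↥N, f (y * (s : G)) * Tg ((y * (s : G))⁻¹ * x) ∂lamN
          = ∫ s : ↥N, (f (y * (s : G)) * starRingEnd ℂ (ξ s)) * Tg (y⁻¹ * x) ∂lamN := by
            congr 1 with s
            have h1 : (y * (s : G))⁻¹ * x = ((s⁻¹ : ↥N) : G) * (y⁻¹ * x) := by
              simp [mul_inv_rev, mul_assoc]
            rw [h1, hTg, TxiAux_shift_left lamN ξ hinv]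
            have h2 : (ξ s⁻¹ : ℂ) = starRingEnd ℂ (ξ s : ℂ) := by
              rw [map_inv, Circle.coe_inv_eq_conj]
            rw [h2]
            ring
        _ = (∫ s : ↥N, f (y * (s : G)) * starRingEnd ℂ (ξ s) ∂lamN) * Tg (y⁻¹ * x) :=
            integral_mul_const _ _
        _ = Tf y * Tg (y⁻¹ * x) := rfl
  -- second Weil application
  have hW2 : ∫ ζ, F ζ ∂ν = ∫ y, Tf y * Tg (y⁻¹ * x) ∂lamG := by
    apply hWeil
    · exact hTfc.mul (hTgc.comp (continuous_inv.mul continuous_const))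
    · exact hTfs.mul_right
    · intro y
      rw [hF y]
      symm
      calc ∫ s : ↥N, Tf (y * (s : G)) * Tg ((y * (s : G))⁻¹ * x) ∂lamN
          = ∫ _s : ↥N, Tf y * Tg (y⁻¹ * x) ∂lamN := by
            congr 1 with s
            exact hQ y s
        _ = Tf y * Tg (y⁻¹ * x) := by simp
  -- Fubini step
  calc ∫ s : ↥N, (∫ y, f y * g (y⁻¹ * (x * (s : G))) ∂lamG) * starRingEnd ℂ (ξ s) ∂lamN
      = ∫ s : ↥N, ∫ y, f y * (g (y⁻¹ * x * (s : G)) * starRingEnd ℂ (ξ s)) ∂lamG ∂lamN := by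
        congr 1 with s
        rw [← integral_mul_const]
        congr 1 with y
        simp [mul_assoc]
    _ = ∫ y, ∫ s : ↥N, f y * (g (y⁻¹ * x * (s : G)) * starRingEnd ℂ (ξ s)) ∂lamN ∂lamG := by
        apply integral_integral_swap_of_hasCompactSupport
        · apply Continuous.mul
          · exact hf.comp continuous_snd
          · apply Continuous.mul
            · apply hg.comp
              exact ((continuous_snd.inv.mul continuous_const).mul
                (continuous_subtype_val.comp continuous_fst))
            · exact hxc.comp continuous_fst
        · apply HasCompactSupport.intro (K := (Set.univ : Set ↥N) ×ˢ tsupport f)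
            (isCompact_univ.prod hfc)
          intro p hp
          have : p.2 ∉ tsupport f := by
            intro h
            exact hp ⟨Set.mem_univ _, h⟩
          have hf0 : f p.2 = 0 := image_eq_zero_of_notMem_tsupport this
          simp [Function.uncurry, hf0]
    _ = ∫ y, f y * Tg (y⁻¹ * x) ∂lamG := by
        congr 1 with y
        rw [integral_const_mul]
        rfl
    _ = ∫ ζ, F ζ ∂ν := hW1.symm
    _ = ∫ y, Tf y * Tg (y⁻¹ * x) ∂lamG := hW2
    _ = ∫ y, (∫ t : ↥N, f (y * (t : G)) * starRingEnd ℂ (ξ t) ∂lamN)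
          * (∫ t : ↥N, g (y⁻¹ * x * (t : G)) * starRingEnd ℂ (ξ t) ∂lamN) ∂lamG := rfl
end

section
/- Let G be a locally compact Hausdorff group with left Haar measure λ_G, N a closed normal subgroup with left Haar measure λ_N, ν a measure on G/N satisfying Weil's formula, and ξ : N → 𝕋 a G-invariant character. If f, g : G → ℂ are continuous and compactly supported and either T_ξ(f) = 0 identically or T_ξ(g) = 0 identically, then T_ξ(f ∗_G g) = 0 identically; that is, the kernel of T_ξ on C_c(G) is a two-sided ideal for convolution. -/
open MeasureTheory
open Pointwise

/-- The kernel of `T_ξ` on `C_c(G)` is a two-sided ideal for convolution: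
if `T_ξ f = 0` or `T_ξ g = 0`, then `T_ξ (f ∗_G g) = 0`. -/
theorem Txi_kernel_ideal
    {G : Type*} [Group G] [TopologicalSpace G] [IsTopologicalGroup G]
    [LocallyCompactSpace G] [T2Space G] [MeasurableSpace G] [BorelSpace G]
    (lamG : Measure G) [lamG.IsHaarMeasure]
    (N : Subgroup G) [hNrm : N.Normal] (hNc : IsClosed (N : Set G))
    (lamN : Measure ↥N) [lamN.IsHaarMeasure]
    (ν : Measure (G ⧸ N))
    (hWeil : ∀ (f : G → ℂ) (F : G ⧸ N → ℂ), Continuous f → HasCompactSupport f →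
      (∀ x : G, F (QuotientGroup.mk x) = ∫ s : ↥N, f (x * (s : G)) ∂lamN) →
      ∫ ζ, F ζ ∂ν = ∫ x, f x ∂lamG)
    (ξ : N →* Circle) (hξcont : Continuous fun s : ↥N => ξ s)
    (hinv : ∀ (x s : G) (hs : s ∈ N) (hs' : x⁻¹ * s * x ∈ N),
      ξ ⟨x⁻¹ * s * x, hs'⟩ = ξ ⟨s, hs⟩)
    (f g : G → ℂ)
    (hf : Continuous f) (hfc : HasCompactSupport f)
    (hg : Continuous g) (hgc : HasCompactSupport g)
    (hker : (∀ x : G, ∫ s : ↥N, f (x * (s : G)) * starRingEnd ℂ (ξ s) ∂lamN = 0)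
      ∨ (∀ x : G, ∫ s : ↥N, g (x * (s : G)) * starRingEnd ℂ (ξ s) ∂lamN = 0)) :
    ∀ x : G,
      ∫ s : ↥N, (∫ y, f y * g (y⁻¹ * (x * (s : G))) ∂lamG) * starRingEnd ℂ (ξ s) ∂lamN
        = 0 := by
  haveI : BorelSpace ↥N := Subtype.borelSpace (N : Set G)
  have hNemb : Topology.IsClosedEmbedding ((↑) : ↥N → G) :=
    hNc.isClosedEmbedding_subtypeVal
  -- continuity of the character (as a map to ℂ, conjugated)
  have hξc : Continuous fun s : ↥N => starRingEnd ℂ (ξ s) :=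
    (continuous_subtype_val.comp hξcont).star
  set c : ↥N → ℂ := fun s => starRingEnd ℂ (ξ s) with hc
  set Φ : G → ℂ := fun u => ∫ s : ↥N, g (u * (s : G)) * c s ∂lamN with hΦ
  -- Step 1: swap the integrals
  have key : ∀ x : G,
      ∫ s : ↥N, (∫ y, f y * g (y⁻¹ * (x * (s : G))) ∂lamG) * c s ∂lamN
      = ∫ y, f y * Φ (y⁻¹ * x) ∂lamG := by
    intro x
    have h1 : (fun s : ↥N => (∫ y, f y * g (y⁻¹ * (x * (s : G))) ∂lamG) * c s)
        = fun s : ↥N => ∫ y, f y * (g ((y⁻¹ * x) * (s : G)) * c s) ∂lamG := by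
      funext s
      rw [← integral_mul_const]
      congr 1; funext y
      rw [mul_assoc y⁻¹ x, mul_assoc]
    rw [h1]
    have hcont : Continuous (Function.uncurry
        fun (s : ↥N) (y : G) => f y * (g ((y⁻¹ * x) * (s : G)) * c s)) := by
      apply (hf.comp continuous_snd).mul
      exact (hg.comp (((continuous_snd.inv.mul continuous_const)).mul
        (continuous_subtype_val.comp continuous_fst))).mul (hξc.comp continuous_fst)
    have hsupp : HasCompactSupport (Function.uncurry
        fun (s : ↥N) (y : G) => f y * (g ((y⁻¹ * x) * (s : G)) * c s)) := by
      set L : Set G := (fun p : G × G => x⁻¹ * p.1 * p.2) '' (tsupport f ×ˢ tsupport g)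
        with hL
      have Lcomp : IsCompact L :=
        (hfc.prod hgc).image (((continuous_const.mul continuous_fst)).mul continuous_snd)
      apply HasCompactSupport.intro
        ((hNemb.isCompact_preimage Lcomp).prod hfc)
      rintro ⟨s, y⟩ hp
      simp only [Set.mem_prod, Set.mem_preimage, not_and_or] at hp
      by_cases hy : y ∈ tsupport f
      · rcases hp with hp | hp
        · have hg0 : g ((y⁻¹ * x) * (s : G)) = 0 := by
            by_contra hne
            apply hp
            have hmem : (y⁻¹ * x) * (s : G) ∈ tsupport g :=
              subset_tsupport _ hne
            refine ⟨(y, (y⁻¹ * x) * (s : G)), ⟨hy, hmem⟩, ?_⟩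
            simp only []
            group
          simp [Function.uncurry, hg0]
        · exact absurd hy hp
      · have : f y = 0 := image_eq_zero_of_notMem_tsupport hy
        simp [Function.uncurry, this]
    rw [integral_integral_swap_of_hasCompactSupport hcont hsupp]
    congr 1; funext y
    rw [hΦ]
    simp only []
    rw [← integral_const_mul]
  -- continuity of Φ
  have Φcont : Continuous Φ := by
    rw [continuous_iff_continuousAt]
    intro u₀
    obtain ⟨t, t_comp, ht⟩ := exists_compact_mem_nhds u₀
    have A : ContinuousOn Φ t := by
      apply continuousOn_integral_of_compact_support
        (k := ((↑) : ↥N → G) ⁻¹' (t⁻¹ * tsupport g))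
        (hNemb.isCompact_preimage (t_comp.inv.mul hgc))
      · exact ((hg.comp ((continuous_fst.mul
          (continuous_subtype_val.comp continuous_snd)))).mul
          (hξc.comp continuous_snd)).continuousOn
      · intro u s hu hs
        have hg0 : g (u * (s : G)) = 0 := by
          by_contra hne
          apply hs
          have hmem : u * (s : G) ∈ tsupport g := subset_tsupport _ hne
          have : (s : G) = u⁻¹ * (u * (s : G)) := by group
          rw [Set.mem_preimage, this]
          exact Set.mul_mem_mul (Set.inv_mem_inv.2 hu) hmem
        simp [hg0]
    exact A.continuousAt ht
  intro x
  show ∫ s : ↥N, (∫ y, f y * g (y⁻¹ * (x * (s : G))) ∂lamG) * c s ∂lamN = 0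
  rcases hker with hf0 | hg0
  · -- case T_ξ f = 0 : use Weil's formula
    have Φshift : ∀ (u : G) (t : ↥N), Φ ((t : G)⁻¹ * u) = c t * Φ u := by
      intro u t
      have hmemc : u⁻¹ * (t : G) * u ∈ N := by
        have := hNrm.conj_mem (t : G) t.2 u⁻¹
        simpa [inv_inv] using this
      set cc : ↥N := ⟨u⁻¹ * (t : G) * u, hmemc⟩ with hcc
      have h2 : ∀ s : ↥N, g ((t : G)⁻¹ * u * ((cc * s : ↥N) : G)) * c (cc * s)
          = c t * (g (u * (s : G)) * c s) := by
        intro s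
        have e1 : (t : G)⁻¹ * u * ((cc * s : ↥N) : G) = u * (s : G) := by
          push_cast [hcc]
          group
        have e2 : ξ cc = ξ t := by
          have := hinv u (t : G) t.2 hmemc
          simpa [hcc] using this
        rw [e1, hc]
        simp only [map_mul, e2]
        push_cast
        rw [map_mul]
        ring
      calc Φ ((t : G)⁻¹ * u)
          = ∫ s : ↥N, g ((t : G)⁻¹ * u * ((cc * s : ↥N) : G)) * c (cc * s) ∂lamN := by
            rw [hΦ]
            exact (integral_mul_left_eq_self
              (fun s : ↥N => g ((t : G)⁻¹ * u * (s : G)) * c s) cc).symm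
        _ = ∫ s : ↥N, c t * (g (u * (s : G)) * c s) ∂lamN := by
            congr 1; funext s; exact h2 s
        _ = c t * Φ u := by rw [integral_const_mul, hΦ]
    set h : G → ℂ := fun y => f y * Φ (y⁻¹ * x) with hh
    have hhcont : Continuous h :=
      hf.mul (Φcont.comp (continuous_inv.mul continuous_const))
    have hhsupp : HasCompactSupport h := by
      apply HasCompactSupport.intro hfc
      intro y hy
      simp [hh, image_eq_zero_of_notMem_tsupport hy]
    have claim3 : ∀ z : G, ∫ t : ↥N, h (z * (t : G)) ∂lamN = 0 := by
      intro z
      have e3 : ∀ t : ↥N, h (z * (t : G))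
          = (f (z * (t : G)) * c t) * Φ (z⁻¹ * x) := by
        intro t
        have e4 : (z * (t : G))⁻¹ * x = (t : G)⁻¹ * (z⁻¹ * x) := by group
        rw [hh]
        simp only []
        rw [e4, Φshift (z⁻¹ * x) t]
        ring
      calc ∫ t : ↥N, h (z * (t : G)) ∂lamN
          = ∫ t : ↥N, (f (z * (t : G)) * c t) * Φ (z⁻¹ * x) ∂lamN := by
            congr 1; funext t; exact e3 t
        _ = (∫ t : ↥N, f (z * (t : G)) * c t ∂lamN) * Φ (z⁻¹ * x) := by
            rw [integral_mul_const]
        _ = 0 := by rw [hf0 z, zero_mul]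
    have := hWeil h (fun _ => 0) hhcont hhsupp (fun z => (claim3 z).symm)
    rw [integral_zero] at this
    rw [key x, ← this]
  · -- case T_ξ g = 0 : immediate after swapping
    rw [key x]
    have : ∀ y : G, Φ (y⁻¹ * x) = 0 := fun y => hg0 (y⁻¹ * x)
    simp [this]
end

section
/- Let G be a locally compact Hausdorff group with left Haar measure λ_G and modular function Δ_G, and N a closed normal subgroup with left Haar measure λ_N, modular function Δ_N, and Δ_G restricted to N equal to Δ_N. Let σ_N : G → (0,∞) be the homomorphism with ∫_N v(x s x⁻¹) dλ_N(s) = σ_N(x) ∫_N v dλ_N for all v ∈ C_c(N), and assume the inversion formula ∫_N v(s⁻¹) Δ_N(s⁻¹) dλ_N(s) = ∫_N v dλ_N holds for v ∈ C_c(N). Then for every G-invariant character ξ : N → 𝕋, every continuous compactly supported f : G → ℂ, and every x ∈ G, T_ξ(f^{∗G})(x) = Δ_G(x⁻¹) σ_N(x) conj(T_ξ(f)(x⁻¹)). -/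
open MeasureTheory

private lemma deltaG_mul_aux {G : Type*} [Group G] [TopologicalSpace G] [IsTopologicalGroup G]
    [LocallyCompactSpace G] [T2Space G] [MeasurableSpace G] [BorelSpace G]
    (lamG : Measure G) [lamG.IsHaarMeasure]
    (ΔG : G → ℝ)
    (hΔG : ∀ (f : G → ℂ), Continuous f → HasCompactSupport f → ∀ t : G,
      ∫ x, f (x * t) ∂lamG = ((ΔG t)⁻¹ : ℂ) * ∫ x, f x ∂lamG)
    (a b : G) : ΔG (a * b) = ΔG a * ΔG b := by
  obtain ⟨g, gc, gnn, g1⟩ := exists_continuous_nonneg_pos (1 : G)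
  set h : G → ℂ := fun y => ((g y : ℝ) : ℂ) with hh
  have hcont : Continuous h := Complex.continuous_ofReal.comp g.continuous
  have hsupp : HasCompactSupport h := gc.comp_left (g := Complex.ofReal) Complex.ofReal_zero
  have hint : ∫ y, h y ∂lamG ≠ 0 := by
    have h0 : ∫ y, h y ∂lamG = ((∫ y, g y ∂lamG : ℝ) : ℂ) := by
      simpa [hh] using integral_ofReal (𝕜 := ℂ) (f := fun y => g y) (μ := lamG)
    rw [h0]
    exact_mod_cast ne_of_gt
      (g.continuous.integral_pos_of_hasCompactSupport_nonneg_nonzero gc gnn g1)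
  have h2cont : Continuous fun y => h (y * b) := hcont.comp (continuous_mul_right b)
  have h2supp : HasCompactSupport fun y => h (y * b) :=
    hsupp.comp_homeomorph (Homeomorph.mulRight b)
  have e1 := hΔG h hcont hsupp (a * b)
  have e2 := hΔG _ h2cont h2supp a
  have e3 := hΔG h hcont hsupp b
  simp only [← mul_assoc] at e1
  rw [e2, e3] at e1
  have key : (((ΔG (a * b))⁻¹ : ℝ) : ℂ) = (((ΔG a)⁻¹ : ℝ) : ℂ) * (((ΔG b)⁻¹ : ℝ) : ℂ) := by
    push_cast
    exact mul_right_cancel₀ hint (by rw [mul_assoc]; exact e1.symm)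
  have key2 : (ΔG (a * b))⁻¹ = (ΔG a)⁻¹ * (ΔG b)⁻¹ := by exact_mod_cast key
  have h4 : ΔG (a * b) = ΔG b * ΔG a := by
    simpa [mul_inv] using congrArg Inv.inv key2
  rw [h4, mul_comm]

/-- `T_ξ (f^{∗G}) x = Δ_G x⁻¹ · σ_N x · conj (T_ξ f x⁻¹)`, i.e.
`T_ξ` intertwines the involution of `L¹(G)` with the covariant involution. -/
theorem Txi_involution
    {G : Type*} [Group G] [TopologicalSpace G] [IsTopologicalGroup G]
    [LocallyCompactSpace G] [T2Space G] [MeasurableSpace G] [BorelSpace G]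
    (lamG : Measure G) [lamG.IsHaarMeasure]
    (N : Subgroup G) (hNrm : N.Normal) (hNc : IsClosed (N : Set G))
    (lamN : Measure ↥N) [lamN.IsHaarMeasure]
    (ΔG : G → ℝ) (hΔGpos : ∀ x, 0 < ΔG x)
    (hΔG : ∀ (f : G → ℂ), Continuous f → HasCompactSupport f → ∀ t : G,
      ∫ x, f (x * t) ∂lamG = ((ΔG t)⁻¹ : ℂ) * ∫ x, f x ∂lamG)
    (ΔN : ↥N → ℝ) (hΔNpos : ∀ s, 0 < ΔN s)
    (hΔN : ∀ (v : ↥N → ℂ), Continuous v → HasCompactSupport v → ∀ t : ↥N,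
      ∫ s, v (s * t) ∂lamN = ((ΔN t)⁻¹ : ℂ) * ∫ s, v s ∂lamN)
    (hrestr : ∀ s : ↥N, ΔG (s : G) = ΔN s)
    (σ : G → ℝ)
    (hσ : ∀ (x : G) (v : ↥N → ℂ), Continuous v → HasCompactSupport v →
      ∫ s : ↥N, v ⟨x * (s : G) * x⁻¹, hNrm.conj_mem (s : G) s.2 x⟩ ∂lamN
        = (σ x : ℂ) * ∫ s : ↥N, v s ∂lamN)
    (hinvN : ∀ (v : ↥N → ℂ), Continuous v → HasCompactSupport v →
      ∫ s : ↥N, v s⁻¹ * ((ΔN s⁻¹ : ℝ) : ℂ) ∂lamN = ∫ s : ↥N, v s ∂lamN)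
    (ξ : N →* Circle) (hξcont : Continuous fun s : ↥N => ξ s)
    (hinv : ∀ (x s : G) (hs : s ∈ N) (hs' : x⁻¹ * s * x ∈ N),
      ξ ⟨x⁻¹ * s * x, hs'⟩ = ξ ⟨s, hs⟩)
    (f : G → ℂ) (hf : Continuous f) (hfc : HasCompactSupport f) (x : G) :
    ∫ s : ↥N, ((ΔG ((x * (s : G))⁻¹) : ℝ) : ℂ) * starRingEnd ℂ (f ((x * (s : G))⁻¹))
        * starRingEnd ℂ (ξ s) ∂lamN
      = ((ΔG x⁻¹ : ℝ) : ℂ) * ((σ x : ℝ) : ℂ)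
        * starRingEnd ℂ (∫ s : ↥N, f (x⁻¹ * (s : G)) * starRingEnd ℂ (ξ s) ∂lamN) := by
  have hmul : ∀ a b : G, ΔG (a * b) = ΔG a * ΔG b := deltaG_mul_aux lamG ΔG hΔG
  have hcoe : Topology.IsClosedEmbedding ((↑) : ↥N → G) :=
    Topology.IsClosedEmbedding.subtypeVal hNc
  have hξc : Continuous fun s : ↥N => ((ξ s : Circle) : ℂ) :=
    continuous_subtype_val.comp hξcont
  -- the test functions
  set u : G → ℂ := fun y => starRingEnd ℂ (f (y * x⁻¹)) with hu
  set w : ↥N → ℂ := fun s => u (s : G) * ((ξ s : Circle) : ℂ) with hw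
  set w2 : ↥N → ℂ := fun s => starRingEnd ℂ (f (x⁻¹ * (s : G))) * ((ξ s : Circle) : ℂ)
    with hw2
  have ucont : Continuous u := Complex.continuous_conj.comp (hf.comp (continuous_mul_right x⁻¹))
  have usupp : HasCompactSupport u :=
    (hfc.comp_homeomorph (Homeomorph.mulRight x⁻¹)).comp_left (g := starRingEnd ℂ) (map_zero _)
  have wcont : Continuous w := (ucont.comp continuous_subtype_val).mul hξc
  have wsupp : HasCompactSupport w :=
    HasCompactSupport.mul_right (usupp.comp_isClosedEmbedding hcoe)
  have u2cont : Continuous fun y : G => starRingEnd ℂ (f (x⁻¹ * y)) :=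
    Complex.continuous_conj.comp (hf.comp (continuous_mul_left x⁻¹))
  have u2supp : HasCompactSupport fun y : G => starRingEnd ℂ (f (x⁻¹ * y)) :=
    (hfc.comp_homeomorph (Homeomorph.mulLeft x⁻¹)).comp_left (g := starRingEnd ℂ) (map_zero _)
  have w2cont : Continuous w2 := (u2cont.comp continuous_subtype_val).mul hξc
  have w2supp : HasCompactSupport w2 :=
    HasCompactSupport.mul_right (u2supp.comp_isClosedEmbedding hcoe)
  -- invariance of ξ under conjugation, in the convenient form
  have hξconj : ∀ s : ↥N,
      (ξ ⟨x * (s : G) * x⁻¹, hNrm.conj_mem (s : G) s.2 x⟩ : Circle) = ξ s := by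
    intro s
    have hmem : x⁻¹⁻¹ * (s : G) * x⁻¹ ∈ N := by
      rw [inv_inv]; exact hNrm.conj_mem _ s.2 x
    have h1 := hinv x⁻¹ (s : G) s.2 hmem
    have h2 : (⟨x⁻¹⁻¹ * (s : G) * x⁻¹, hmem⟩ : ↥N)
        = ⟨x * (s : G) * x⁻¹, hNrm.conj_mem (s : G) s.2 x⟩ :=
      Subtype.ext (show x⁻¹⁻¹ * (s : G) * x⁻¹ = x * (s : G) * x⁻¹ by rw [inv_inv])
    calc (ξ ⟨x * (s : G) * x⁻¹, hNrm.conj_mem (s : G) s.2 x⟩ : Circle)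
        = ξ ⟨x⁻¹⁻¹ * (s : G) * x⁻¹, hmem⟩ := (congrArg ξ h2).symm
      _ = ξ ⟨(s : G), s.2⟩ := h1
      _ = ξ s := by simp
  -- step A: rewrite the LHS
  have eA : ∫ s : ↥N, ((ΔG ((x * (s : G))⁻¹) : ℝ) : ℂ) * starRingEnd ℂ (f ((x * (s : G))⁻¹))
        * starRingEnd ℂ (ξ s) ∂lamN
      = ((ΔG x⁻¹ : ℝ) : ℂ) * ∫ s : ↥N, w s⁻¹ * ((ΔN s⁻¹ : ℝ) : ℂ) ∂lamN := by
    rw [← integral_const_mul]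
    congr 1
    funext s
    have hv : (x * (s : G))⁻¹ = (s : G)⁻¹ * x⁻¹ := mul_inv_rev _ _
    have hd : ΔG ((x * (s : G))⁻¹) = ΔN s⁻¹ * ΔG x⁻¹ := by
      rw [hv, hmul]
      congr 1
      simpa using hrestr s⁻¹
    have hws : w s⁻¹ = starRingEnd ℂ (f ((s : G)⁻¹ * x⁻¹)) * starRingEnd ℂ (ξ s) := by
      rw [hw]
      simp only [hu, map_inv, Circle.coe_inv_eq_conj, InvMemClass.coe_inv]
    rw [hd, hv, hws]
    push_cast
    ring
  -- step B: the inversion formula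
  have eB := hinvN w wcont wsupp
  -- step C: conjugation substitution
  have eC : ∫ s : ↥N, w s ∂lamN = ((σ x : ℝ) : ℂ) * ∫ s : ↥N, w2 s ∂lamN := by
    rw [← hσ x w2 w2cont w2supp]
    congr 1
    funext s
    rw [hw, hw2]
    simp only [hξconj s, hu]
    congr 2
    group
  -- step D: pulling the conjugation inside
  have eD : starRingEnd ℂ (∫ s : ↥N, f (x⁻¹ * (s : G)) * starRingEnd ℂ (ξ s) ∂lamN)
      = ∫ s : ↥N, w2 s ∂lamN := by
    rw [← integral_conj]
    congr 1
    funext s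
    rw [hw2]
    simp [map_mul]
  rw [eA, eB, eC, mul_assoc, eD]
end

section
/- Let G be a locally compact Hausdorff group with left Haar measure λ_G and modular function Δ_G, and N a compact normal subgroup with Haar measure λ_N satisfying ∫_N v(x s x⁻¹) dλ_N(s) = ∫_N v dλ_N for all v ∈ C_c(N) and x ∈ G, with Δ_G restricted to N equal to the modular function Δ_N of N, and with the inversion formula ∫_N v(s⁻¹) Δ_N(s⁻¹) dλ_N(s) = ∫_N v dλ_N. Then for every G-invariant character ξ : N → 𝕋 and every continuous compactly supported f : G → ℂ, T_ξ(f^{∗G}) = (T_ξ(f))^{∗G}. -/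
open MeasureTheory

/-- If `N` is a compact normal subgroup (so `σ_N ≡ 1`), then
`T_ξ (f^{∗G}) = (T_ξ f)^{∗G}` for every `G`-invariant character `ξ` and `f ∈ C_c(G)`. -/
theorem Txi_involution_compact
    {G : Type*} [Group G] [TopologicalSpace G] [IsTopologicalGroup G]
    [LocallyCompactSpace G] [T2Space G] [MeasurableSpace G] [BorelSpace G]
    (lamG : Measure G) [lamG.IsHaarMeasure]
    (N : Subgroup G) (hNrm : N.Normal) (hNcpt : IsCompact (N : Set G))
    (lamN : Measure ↥N) [lamN.IsHaarMeasure]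
    (ΔG : G → ℝ) (hΔGpos : ∀ x, 0 < ΔG x)
    (hΔG : ∀ (f : G → ℂ), Continuous f → HasCompactSupport f → ∀ t : G,
      ∫ x, f (x * t) ∂lamG = ((ΔG t)⁻¹ : ℂ) * ∫ x, f x ∂lamG)
    (ΔN : ↥N → ℝ) (hΔNpos : ∀ s, 0 < ΔN s)
    (hΔN : ∀ (v : ↥N → ℂ), Continuous v → HasCompactSupport v → ∀ t : ↥N,
      ∫ s, v (s * t) ∂lamN = ((ΔN t)⁻¹ : ℂ) * ∫ s, v s ∂lamN)
    (hrestr : ∀ s : ↥N, ΔG (s : G) = ΔN s)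
    (hσ1 : ∀ (x : G) (v : ↥N → ℂ), Continuous v → HasCompactSupport v →
      ∫ s : ↥N, v ⟨x * (s : G) * x⁻¹, hNrm.conj_mem (s : G) s.2 x⟩ ∂lamN
        = ∫ s : ↥N, v s ∂lamN)
    (hinvN : ∀ (v : ↥N → ℂ), Continuous v → HasCompactSupport v →
      ∫ s : ↥N, v s⁻¹ * ((ΔN s⁻¹ : ℝ) : ℂ) ∂lamN = ∫ s : ↥N, v s ∂lamN)
    (ξ : N →* Circle) (hξcont : Continuous fun s : ↥N => ξ s)
    (hinv : ∀ (x s : G) (hs : s ∈ N) (hs' : x⁻¹ * s * x ∈ N),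
      ξ ⟨x⁻¹ * s * x, hs'⟩ = ξ ⟨s, hs⟩)
    (f : G → ℂ) (hf : Continuous f) (hfc : HasCompactSupport f) :
    ∀ x : G,
      ∫ s : ↥N, ((ΔG ((x * (s : G))⁻¹) : ℝ) : ℂ) * starRingEnd ℂ (f ((x * (s : G))⁻¹))
          * starRingEnd ℂ (ξ s) ∂lamN
        = ((ΔG x⁻¹ : ℝ) : ℂ)
          * starRingEnd ℂ (∫ s : ↥N, f (x⁻¹ * (s : G)) * starRingEnd ℂ (ξ s) ∂lamN) := by
  haveI : CompactSpace ↥N := isCompact_iff_compactSpace.mp hNcpt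
  have hcsN : ∀ v : ↥N → ℂ, HasCompactSupport v := fun v =>
    IsCompact.of_isClosed_subset isCompact_univ (isClosed_tsupport v) (Set.subset_univ _)
  have hξc : Continuous fun s : ↥N => ((ξ s : ℂ)) := continuous_induced_dom.comp hξcont
  -- the total mass is nonzero
  have hIN : (∫ _s : ↥N, (1 : ℂ) ∂lamN) ≠ 0 := by
    rw [integral_const, Complex.real_smul, mul_one]
    have h0 : lamN Set.univ ≠ 0 :=
      ((isOpen_univ.measure_pos lamN ⟨1, trivial⟩)).ne'
    have hfin : lamN Set.univ ≠ ⊤ := measure_ne_top lamN _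
    exact_mod_cast (ENNReal.toReal_pos h0 hfin).ne'
  -- the modular function of the compact group N is trivial
  have hΔN1 : ∀ t : ↥N, ΔN t = 1 := by
    intro t
    have h := hΔN (fun _ => (1 : ℂ)) continuous_const (hcsN _) t
    have h2 : ((ΔN t : ℂ))⁻¹ = 1 := by
      have h3 : ((ΔN t : ℂ))⁻¹ * (∫ _s : ↥N, (1 : ℂ) ∂lamN)
          = 1 * (∫ _s : ↥N, (1 : ℂ) ∂lamN) := by rw [one_mul, ← h]
      exact mul_right_cancel₀ hIN h3
    have h4 : (ΔN t)⁻¹ = (1 : ℝ) := by exact_mod_cast h2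
    exact inv_eq_one.mp h4
  -- ΔG is multiplicative
  have hmul : ∀ a b : G, ΔG (a * b) = ΔG a * ΔG b := by
    intro a b
    obtain ⟨g, gc, gnn, g1⟩ : ∃ g : C(G, ℝ), HasCompactSupport g ∧ 0 ≤ g ∧ g 1 ≠ 0 :=
      exists_continuous_nonneg_pos 1
    have hI : (0:ℝ) < ∫ x, g x ∂lamG :=
      g.continuous.integral_pos_of_hasCompactSupport_nonneg_nonzero gc gnn g1
    set gc' : G → ℂ := fun x => (g x : ℂ) with hgc'
    have hcont : Continuous gc' := Complex.continuous_ofReal.comp g.continuous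
    have hcs : HasCompactSupport gc' := by
      apply gc.comp_left (g := Complex.ofReal) Complex.ofReal_zero
    have hI' : (∫ x, gc' x ∂lamG) ≠ 0 := by
      rw [show (∫ x, gc' x ∂lamG) = ((∫ x, g x ∂lamG : ℝ) : ℂ) from integral_ofReal]
      exact_mod_cast hI.ne'
    have h1 : ∫ x, gc' (x * (a * b)) ∂lamG = ((ΔG (a*b))⁻¹ : ℂ) * ∫ x, gc' x ∂lamG :=
      hΔG gc' hcont hcs (a*b)
    have h2 : ∫ x, gc' (x * (a * b)) ∂lamG
        = ((ΔG a)⁻¹ : ℂ) * (((ΔG b)⁻¹ : ℂ) * ∫ x, gc' x ∂lamG) := by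
      have hb := hΔG gc' hcont hcs b
      have hcont2 : Continuous fun y => gc' (y * b) := hcont.comp (continuous_mul_right b)
      have hcs2 : HasCompactSupport fun y => gc' (y * b) :=
        hcs.comp_homeomorph (Homeomorph.mulRight b)
      have ha := hΔG (fun y => gc' (y * b)) hcont2 hcs2 a
      simp only [mul_assoc] at ha ⊢
      rw [ha, hb]
    rw [h1] at h2
    have h2' : ((ΔG (a*b))⁻¹ : ℂ) * (∫ x, gc' x ∂lamG)
        = (((ΔG a : ℂ))⁻¹ * ((ΔG b : ℂ))⁻¹) * (∫ x, gc' x ∂lamG) := by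
      rw [h2, mul_assoc]
    have hc : ((ΔG (a*b) : ℂ))⁻¹ = ((ΔG a : ℂ))⁻¹ * ((ΔG b : ℂ))⁻¹ :=
      mul_right_cancel₀ hI' h2'
    have hr : (ΔG (a*b))⁻¹ = (ΔG a)⁻¹ * (ΔG b)⁻¹ := by exact_mod_cast hc
    rw [← mul_inv] at hr
    exact inv_injective hr
  have hΔGN : ∀ s : ↥N, ΔG ((s : G)) = 1 := fun s => by rw [hrestr]; exact hΔN1 s
  intro x
  set w : ↥N → ℂ := fun s => (starRingEnd ℂ) (f (x⁻¹ * (s : G))) * (ξ s : ℂ) with hw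
  set v : ↥N → ℂ := fun s => (starRingEnd ℂ) (f ((s : G) * x⁻¹)) * (ξ s : ℂ) with hv
  have hwcont : Continuous w :=
    (Complex.continuous_conj.comp (hf.comp (continuous_const.mul continuous_subtype_val))).mul hξc
  have hvcont : Continuous v :=
    (Complex.continuous_conj.comp (hf.comp (continuous_subtype_val.mul continuous_const))).mul hξc
  have stepA : ∀ s : ↥N,
      ((ΔG ((x * (s : G))⁻¹) : ℝ) : ℂ) * starRingEnd ℂ (f ((x * (s : G))⁻¹))
        * starRingEnd ℂ (ξ s)
      = ((ΔG x⁻¹ : ℝ) : ℂ) * v s⁻¹ := by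
    intro s
    have e1 : (x * (s : G))⁻¹ = ((s⁻¹ : ↥N) : G) * x⁻¹ := by
      simp [mul_inv_rev]
    have e2 : ΔG ((x * (s : G))⁻¹) = ΔG x⁻¹ := by
      rw [e1, hmul, hΔGN s⁻¹, one_mul]
    have e3 : (starRingEnd ℂ) ((ξ s : ℂ)) = ((ξ s⁻¹ : ℂ)) := by
      rw [map_inv ξ s, Circle.coe_inv_eq_conj]
    rw [e2, e1, e3, hv]
    ring
  have hkey : ∀ s : ↥N,
      ξ ⟨x * (s : G) * x⁻¹, hNrm.conj_mem (s : G) s.2 x⟩ = ξ s := by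
    intro s
    have hmem' : x⁻¹ * (x * (s : G) * x⁻¹) * x ∈ N := by
      have : x⁻¹ * (x * (s : G) * x⁻¹) * x = (s : G) := by group
      rw [this]; exact s.2
    have h1 := hinv x (x * (s : G) * x⁻¹) (hNrm.conj_mem (s : G) s.2 x) hmem'
    have h2 : (⟨x⁻¹ * (x * (s : G) * x⁻¹) * x, hmem'⟩ : ↥N) = s := by
      apply Subtype.ext; show x⁻¹ * (x * (s : G) * x⁻¹) * x = (s : G); group
    rw [h2] at h1
    exact h1.symm
  calc
    ∫ s : ↥N, ((ΔG ((x * (s : G))⁻¹) : ℝ) : ℂ) * starRingEnd ℂ (f ((x * (s : G))⁻¹))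
          * starRingEnd ℂ (ξ s) ∂lamN
        = ∫ s : ↥N, ((ΔG x⁻¹ : ℝ) : ℂ) * v s⁻¹ ∂lamN := by
          exact integral_congr_ae (Filter.Eventually.of_forall fun s => stepA s)
    _ = ((ΔG x⁻¹ : ℝ) : ℂ) * ∫ s : ↥N, v s⁻¹ ∂lamN := integral_const_mul _ _
    _ = ((ΔG x⁻¹ : ℝ) : ℂ) * ∫ s : ↥N, v s ∂lamN := by
          congr 1
          rw [← hinvN v hvcont (hcsN v)]
          refine integral_congr_ae (Filter.Eventually.of_forall fun s => ?_)
          show v s⁻¹ = v s⁻¹ * ((ΔN s⁻¹ : ℝ) : ℂ)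
          rw [hΔN1 s⁻¹]; simp
    _ = ((ΔG x⁻¹ : ℝ) : ℂ) * ∫ s : ↥N, w s ∂lamN := by
          congr 1
          rw [← hσ1 x w hwcont (hcsN w)]
          refine integral_congr_ae (Filter.Eventually.of_forall fun s => ?_)
          show v s = w ⟨x * (s : G) * x⁻¹, hNrm.conj_mem (s : G) s.2 x⟩
          have e : (s : G) * x⁻¹ = x⁻¹ * (x * (s : G) * x⁻¹) := by group
          calc v s = (starRingEnd ℂ) (f ((s : G) * x⁻¹)) * (ξ s : ℂ) := rfl
            _ = (starRingEnd ℂ) (f (x⁻¹ * (x * (s : G) * x⁻¹)))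
                * ((ξ ⟨x * (s : G) * x⁻¹, hNrm.conj_mem (s : G) s.2 x⟩ : Circle) : ℂ) := by
                rw [← e, hkey s]
            _ = w ⟨x * (s : G) * x⁻¹, hNrm.conj_mem (s : G) s.2 x⟩ := rfl
    _ = ((ΔG x⁻¹ : ℝ) : ℂ)
          * starRingEnd ℂ (∫ s : ↥N, f (x⁻¹ * (s : G)) * starRingEnd ℂ (ξ s) ∂lamN) := by
          congr 1
          rw [← integral_conj]
          refine integral_congr_ae (Filter.Eventually.of_forall fun s => ?_)
          show w s = (starRingEnd ℂ) (f (x⁻¹ * (s : G)) * starRingEnd ℂ (ξ s))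
          show (starRingEnd ℂ) (f (x⁻¹ * (s : G))) * (ξ s : ℂ) = _
          simp [map_mul]
end
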